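/- Let K be a convex body in S^d ⊆ ℝ^{d+1}. For x ∈ S^d with −x in the interior of K*, let f_x denote the central projection of the open hemisphere H_x onto the tangent hyperplane {y ∈ ℝ^{d+1} : ⟨x,y⟩ = 1} of S^d at x, given by f_x(y) = y/⟨x,y⟩; then f_x(K) is a convex body of that d-dimensional affine hyperplane. The spherical illumination number satisfies I_{S^d}(K) = min { I(f_x(K)) : x ∈ S^d, −x ∈ interior of K* }, where I(f_x(K)) is the Euclidean illumination number of f_x(K) computed within the hyperplane. -/

import Mathlib

open RealInnerProductSpace Metric Set

noncomputable section

/-- Euclidean `n`-space. -/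
abbrev Euc (n : ℕ) := EuclideanSpace ℝ (Fin n)

/-- The unit sphere `S^d` in `ℝ^{d+1}`. -/
def uSphere (d : ℕ) : Set (Euc (d + 1)) := Metric.sphere 0 1

/-- Radial (normalizing) projection onto the unit sphere. -/
def nproj {n : ℕ} (x : Euc n) : Euc n := ‖x‖⁻¹ • x

/-- The spherical segment (shorter great-circle arc) with endpoints `p` and `q`
(meaningful when `p ≠ -q`). -/
def sphSeg {n : ℕ} (p q : Euc n) : Set (Euc n) :=
  (fun t : ℝ => nproj ((1 - t) • p + t • q)) '' Set.Icc 0 1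

/-- The relative interior of the spherical segment with endpoints `p` and `q`. -/
def sphOpenSeg {n : ℕ} (p q : Euc n) : Set (Euc n) :=
  (fun t : ℝ => nproj ((1 - t) • p + t • q)) '' Set.Ioo 0 1

/-- The great circle through `p` and `q`. -/
def greatCircle (d : ℕ) (p q : Euc (d + 1)) : Set (Euc (d + 1)) :=
  {z ∈ uSphere d | z ∈ Submodule.span ℝ {p, q}}

/-- The open hemisphere with center `x`. -/
def openHemi (d : ℕ) (x : Euc (d + 1)) : Set (Euc (d + 1)) :=
  {y ∈ uSphere d | 0 < ⟪x, y⟫}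

/-- The `(d-1)`-dimensional great sphere of `S^d` with pole `u`. -/
def greatSphere (d : ℕ) (u : Euc (d + 1)) : Set (Euc (d + 1)) :=
  {y ∈ uSphere d | ⟪u, y⟫ = 0}

/-- A set `C ⊆ S^d` is spherically convex if it is contained in an open hemisphere
and contains the shorter arc connecting any two of its points. -/
def SphConvex (d : ℕ) (C : Set (Euc (d + 1))) : Prop :=
  C ⊆ uSphere d ∧ (∃ x ∈ uSphere d, C ⊆ openHemi d x) ∧
    ∀ p ∈ C, ∀ q ∈ C, sphSeg p q ⊆ C

/-- The interior of `K` relative to the sphere `S^d`. -/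
def sphInt (d : ℕ) (K : Set (Euc (d + 1))) : Set (Euc (d + 1)) :=
  {x ∈ uSphere d | ∃ U : Set (Euc (d + 1)), IsOpen U ∧ x ∈ U ∧ U ∩ uSphere d ⊆ K}

/-- The boundary of a closed set `K ⊆ S^d` relative to the sphere `S^d`. -/
def sphBd (d : ℕ) (K : Set (Euc (d + 1))) : Set (Euc (d + 1)) := K \ sphInt d K

/-- A convex body in `S^d`: a compact spherically convex set with nonempty interior
relative to `S^d`. -/
def IsSphBody (d : ℕ) (K : Set (Euc (d + 1))) : Prop :=
  IsCompact K ∧ SphConvex d K ∧ (sphInt d K).Nonempty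

/-- The boundary point `q` of `K` is illuminated from the point `p`. -/
def SphIlluminated (d : ℕ) (K : Set (Euc (d + 1))) (p q : Euc (d + 1)) : Prop :=
  q ≠ -p ∧ sphSeg p q ∩ sphInt d K = ∅ ∧ (greatCircle d p q ∩ sphInt d K).Nonempty

/-- The set `S` illuminates the convex body `K ⊆ S^d`. -/
def SphIlluminates (d : ℕ) (K S : Set (Euc (d + 1))) : Prop :=
  ∀ q ∈ sphBd d K, ∃ p ∈ S, SphIlluminated d K p q

/-- The illumination number of a convex body `K` in `S^d`: the smallest cardinality of
a set illuminating `K` and lying on a `(d-1)`-dimensional great sphere disjoint from `K`. -/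
def sphIllumNumber (d : ℕ) (K : Set (Euc (d + 1))) : ℕ∞ :=
  sInf {n : ℕ∞ | ∃ u ∈ uSphere d, greatSphere d u ∩ K = ∅ ∧
    ∃ S : Finset (Euc (d + 1)), ↑S ⊆ greatSphere d u ∧ SphIlluminates d K ↑S ∧
      (S.card : ℕ∞) = n}

/-- A convex body in a Euclidean space: compact, convex, with nonempty interior. -/
def IsConvexBody {n : ℕ} (K : Set (Euc n)) : Prop :=
  IsCompact K ∧ Convex ℝ K ∧ (interior K).Nonempty

/-- The boundary point `p` of `K` is illuminated from the direction `v`. -/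
def IlluminatedDir {n : ℕ} (K : Set (Euc n)) (v p : Euc n) : Prop :=
  ∃ t : ℝ, 0 < t ∧ p + t • v ∈ interior K

/-- The finite set of unit vectors `D` illuminates the convex body `K`. -/
def IlluminatesDirs {n : ℕ} (D : Finset (Euc n)) (K : Set (Euc n)) : Prop :=
  (∀ v ∈ D, ‖v‖ = 1) ∧ ∀ p ∈ frontier K, ∃ v ∈ D, IlluminatedDir K v p

/-- The illumination number of a convex body in Euclidean space. -/
def illumNumber {n : ℕ} (K : Set (Euc n)) : ℕ∞ :=
  sInf {m : ℕ∞ | ∃ D : Finset (Euc n), IlluminatesDirs D K ∧ (D.card : ℕ∞) = m}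

/-- The illumination number of a convex body `K` of an affine subspace of a Euclidean
space, computed within the affine span of `K` (directions are parallel to the affine
span; interior and boundary are relative to the affine span). -/
def intIllumNumber {n : ℕ} (K : Set (Euc n)) : ℕ∞ :=
  sInf {m : ℕ∞ | ∃ D : Finset (Euc n),
    (∀ v ∈ D, ‖v‖ = 1 ∧ v ∈ (affineSpan ℝ K).direction) ∧
    (∀ p ∈ intrinsicFrontier ℝ K, ∃ v ∈ D, ∃ t : ℝ, 0 < t ∧
      p + t • v ∈ intrinsicInterior ℝ K) ∧
    (D.card : ℕ∞) = m}

/-- A face of a convex body `K` in Euclidean space: a convex subset `F ⊆ K` such that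
any segment of `K` whose relative interior meets `F` is contained in `F`. -/
def IsFace {n : ℕ} (K F : Set (Euc n)) : Prop :=
  F ⊆ K ∧ Convex ℝ F ∧
    ∀ x ∈ K, ∀ y ∈ K, (openSegment ℝ x y ∩ F).Nonempty → segment ℝ x y ⊆ F

/-- The dimension of a subset of a Euclidean space (dimension of its affine hull). -/
def faceDim {n : ℕ} (F : Set (Euc n)) : ℕ := Module.finrank ℝ (vectorSpan ℝ F)

/-- A face of a convex body `K` in `S^d`: a spherically convex subset `F ⊆ K` such that
any spherical segment of `K` whose relative interior meets `F` is contained in `F`. -/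
def IsSphFace (d : ℕ) (K F : Set (Euc (d + 1))) : Prop :=
  F ⊆ K ∧ SphConvex d F ∧
    ∀ p ∈ K, ∀ q ∈ K, (sphOpenSeg p q ∩ F).Nonempty → sphSeg p q ⊆ F

/-- The (spherical) dimension of a subset `F` of `S^d`: one less than the dimension of
its linear hull. -/
def sphFaceDim (d : ℕ) (F : Set (Euc (d + 1))) : ℕ :=
  Module.finrank ℝ (Submodule.span ℝ F) - 1

/-- The polar body of a convex body `K ⊆ S^d`. -/
def sphPolar (d : ℕ) (K : Set (Euc (d + 1))) : Set (Euc (d + 1)) :=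
  {x ∈ uSphere d | ∀ y ∈ K, ⟪x, y⟫ ≤ 0}

/-- An exposed face of a convex body `L` in `S^d`: a nonempty intersection of `L`
with a supporting great sphere. -/
def IsSphExposedFace (d : ℕ) (L F : Set (Euc (d + 1))) : Prop :=
  F.Nonempty ∧ ∃ u ∈ uSphere d, (∀ y ∈ L, ⟪u, y⟫ ≤ 0) ∧ F = {y ∈ L | ⟪u, y⟫ = 0}

/-- The conjugate face of an exposed face `F` of a convex body `K ⊆ S^d`. -/
def conjFace (d : ℕ) (K F : Set (Euc (d + 1))) : Set (Euc (d + 1)) :=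
  {x ∈ sphPolar d K | ∀ y ∈ F, ⟪x, y⟫ = 0}

/-- Two Euclidean convex bodies are combinatorially equivalent if there is a
homeomorphism between their boundaries mapping faces to faces. -/
def CombEquiv {n : ℕ} (K K' : Set (Euc n)) : Prop :=
  ∃ h : (frontier K) ≃ₜ (frontier K'),
    ∀ X : Set (frontier K),
      IsFace K (Subtype.val '' X) ↔ IsFace K' (Subtype.val '' (h '' X))

/-- The combinatorial illumination number of a Euclidean convex body `K`: the smallest
number of directions that illuminate some convex body combinatorially equivalent to `K`. -/
def combIllumNumber {n : ℕ} (K : Set (Euc n)) : ℕ∞ :=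
  sInf {m : ℕ∞ | ∃ K' : Set (Euc n), IsConvexBody K' ∧ CombEquiv K K' ∧
    ∃ D : Finset (Euc n), IlluminatesDirs D K' ∧ (D.card : ℕ∞) = m}

/-- A convex polytope in `S^d`: a convex body that is the intersection of finitely many
closed hemispheres. -/
def IsSphPolytope (d : ℕ) (P : Set (Euc (d + 1))) : Prop :=
  IsSphBody d P ∧ ∃ s : Finset (Euc (d + 1)), (∀ u ∈ s, u ∈ uSphere d) ∧
    P = uSphere d ∩ {y | ∀ u ∈ s, ⟪u, y⟫ ≤ 0}

end

/-- The central projection from the open hemisphere with center `x` onto the tangent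
hyperplane `{y : ⟪x, y⟫ = 1}` of `S^d` at `x`. -/
noncomputable def centralProj {n : ℕ} (x y : Euc n) : Euc n := (⟪x, y⟫)⁻¹ • y

section AuxLemmas

lemma norm_nproj {n : ℕ} {w : Euc n} (h : w ≠ 0) : ‖nproj w‖ = 1 := by
  simp [nproj, norm_smul, abs_of_nonneg, inv_mul_cancel₀, norm_ne_zero_iff.2 h]

lemma nproj_eq_self {n : ℕ} {w : Euc n} (h : ‖w‖ = 1) : nproj w = w := by
  simp [nproj, h]

lemma nproj_smul {n : ℕ} {c : ℝ} (hc : 0 < c) (w : Euc n) : nproj (c • w) = nproj w := by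
  rcases eq_or_ne w 0 with rfl | hw
  · simp [nproj]
  · have h1 : ‖w‖ ≠ 0 := norm_ne_zero_iff.2 hw
    simp only [nproj, norm_smul, Real.norm_eq_abs, abs_of_pos hc, mul_inv, smul_smul]
    rw [show c⁻¹ * ‖w‖⁻¹ * c = ‖w‖⁻¹ from by rw [mul_comm c⁻¹ ‖w‖⁻¹, mul_assoc, inv_mul_cancel₀ hc.ne', mul_one]]

lemma centralProj_smul {n : ℕ} {x : Euc n} {c : ℝ} (hc : c ≠ 0) (w : Euc n) :
    centralProj x (c • w) = centralProj x w := by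
  simp only [centralProj, real_inner_smul_right, mul_inv, smul_smul]
  rw [show c⁻¹ * (⟪x, w⟫)⁻¹ * c = (⟪x, w⟫)⁻¹ from by rw [mul_comm c⁻¹ (⟪x, w⟫)⁻¹, mul_assoc, inv_mul_cancel₀ hc, mul_one]]

lemma centralProj_nproj {n : ℕ} (x : Euc n) {w : Euc n} (h : w ≠ 0) :
    centralProj x (nproj w) = centralProj x w :=
  centralProj_smul (inv_ne_zero (norm_ne_zero_iff.2 h)) w

lemma inner_centralProj {n : ℕ} {x w : Euc n} (h : ⟪x, w⟫ ≠ 0) : ⟪x, centralProj x w⟫ = 1 := by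
  rw [centralProj, real_inner_smul_right, inv_mul_cancel₀ h]

lemma centralProj_of_inner_one {n : ℕ} {x w : Euc n} (h : ⟪x, w⟫ = 1) : centralProj x w = w := by
  rw [centralProj, h]; simp

lemma centralProj_ne_zero_inner {n : ℕ} {x w : Euc n} (h : ⟪x, w⟫ ≠ 0) : w ≠ 0 := by
  rintro rfl; simp at h

lemma norm_centralProj {n : ℕ} {x w : Euc n} (hw : ‖w‖ = 1) (h : 0 < ⟪x, w⟫) :
    ‖centralProj x w‖ = (⟪x, w⟫)⁻¹ := by
  rw [centralProj, norm_smul, Real.norm_eq_abs, abs_of_pos (inv_pos.2 h), hw, mul_one]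

lemma nproj_centralProj {n : ℕ} {x w : Euc n} (hw : ‖w‖ = 1) (h : 0 < ⟪x, w⟫) :
    nproj (centralProj x w) = w := by
  rw [centralProj, nproj_smul (inv_pos.2 h), nproj_eq_self hw]

lemma inner_nproj {n : ℕ} (x : Euc n) (w : Euc n) : ⟪x, nproj w⟫ = ‖w‖⁻¹ * ⟪x, w⟫ := by
  rw [nproj, real_inner_smul_right]

lemma continuousAt_nproj {n : ℕ} {w : Euc n} (h : w ≠ 0) : ContinuousAt nproj w := by
  have : ContinuousAt (fun y : Euc n => ‖y‖⁻¹ • y) w :=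
    ((continuousAt_id.norm).inv₀ (norm_ne_zero_iff.2 h)).smul continuousAt_id
  exact this

lemma continuousOn_centralProj {n : ℕ} (x : Euc n) :
    ContinuousOn (centralProj x) {y : Euc n | 0 < ⟪x, y⟫} := by
  intro y hy
  apply ContinuousAt.continuousWithinAt
  exact ((Continuous.inner continuous_const continuous_id).continuousAt.inv₀
    (ne_of_gt (show (0:ℝ) < ⟪x, y⟫ from hy))).smul continuousAt_id

lemma isOpen_posInner {n : ℕ} (x : Euc n) : IsOpen {y : Euc n | 0 < ⟪x, y⟫} :=
  isOpen_lt continuous_const (Continuous.inner continuous_const continuous_id)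

lemma exists_pos_mem_nhds_zero {s : Set ℝ} (h : s ∈ nhds (0 : ℝ)) : ∃ ε : ℝ, 0 < ε ∧ ε ∈ s := by
  obtain ⟨δ, hδ, hball⟩ := Metric.mem_nhds_iff.1 h
  exact ⟨δ / 2, by positivity, hball (by simp [Real.ball_eq_Ioo]; constructor <;> linarith)⟩

lemma mem_uSphere_iff {d : ℕ} {y : Euc (d + 1)} : y ∈ uSphere d ↔ ‖y‖ = 1 :=
  mem_sphere_zero_iff_norm

lemma sphInt_subset {d : ℕ} {K : Set (Euc (d + 1))} : sphInt d K ⊆ K := by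
  rintro y ⟨hy, U, hU, hyU, hUK⟩
  exact hUK ⟨hyU, hy⟩

lemma combo_pos {a b t : ℝ} (ha : 0 < a) (hb : 0 < b) (ht : t ∈ Set.Icc (0:ℝ) 1) :
    0 < (1 - t) * a + t * b := by
  rcases ht with ⟨h0, h1⟩
  rcases h0.lt_or_eq with h | h
  · nlinarith [mul_pos h hb, mul_nonneg (sub_nonneg.2 h1) ha.le]
  · rw [← h]; simpa using ha

lemma pos_of_polarInt {d : ℕ} {K : Set (Euc (d + 1))} {x : Euc (d + 1)}
    (hKs : K ⊆ uSphere d) (hxi : -x ∈ sphInt d (sphPolar d K)) :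
    ∀ y ∈ K, 0 < ⟪x, y⟫ := by
  intro y hy
  obtain ⟨hxs, U, hU, hxU, hUP⟩ := hxi
  have hy1 : ‖y‖ = 1 := mem_uSphere_iff.1 (hKs hy)
  have hnn : 0 ≤ ⟪x, y⟫ := by
    have h1 : -x ∈ sphPolar d K := hUP ⟨hxU, hxs⟩
    have h2 := h1.2 y hy
    rw [inner_neg_left] at h2; linarith
  rcases hnn.lt_or_eq with h | h
  · exact h
  exfalso
  have hx1 : ‖(-x : Euc (d + 1))‖ = 1 := mem_uSphere_iff.1 hxs
  have hne : (-x : Euc (d + 1)) ≠ 0 := by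
    intro h0; rw [h0] at hx1; simp at hx1
  have hgcont : Continuous (fun ε : ℝ => -x + ε • y) :=
    continuous_const.add (continuous_id.smul continuous_const)
  have hF : ContinuousAt (fun ε : ℝ => nproj (-x + ε • y)) 0 := by
    exact ContinuousAt.comp (g := nproj) (f := fun ε : ℝ => -x + ε • y) (x := (0:ℝ))
      (continuousAt_nproj (w := -x + (0:ℝ) • y) (by simpa using hne))
      hgcont.continuousAt
  have hF0 : nproj (-x + (0:ℝ) • y) = -x := by simp [nproj_eq_self hx1]
  have hmem : {ε : ℝ | nproj (-x + ε • y) ∈ U} ∈ nhds (0:ℝ) := by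
    apply hF.preimage_mem_nhds
    rw [hF0]
    exact hU.mem_nhds hxU
  obtain ⟨ε, hε, hεU⟩ := exists_pos_mem_nhds_zero hmem
  set w : Euc (d + 1) := -x + ε • y with hw
  have hinner : ⟪w, y⟫ = ε := by
    rw [hw, inner_add_left, real_inner_smul_left, inner_neg_left, ← h,
      real_inner_self_eq_norm_mul_norm, hy1]
    ring
  have hwne : w ≠ 0 := by
    intro h0; rw [h0, inner_zero_left] at hinner; linarith
  have hwS : nproj w ∈ uSphere d := mem_uSphere_iff.2 (norm_nproj hwne)
  have hwP : nproj w ∈ sphPolar d K := hUP ⟨hεU, hwS⟩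
  have := hwP.2 y hy
  rw [nproj, real_inner_smul_left, hinner] at this
  have hpos : 0 < ‖w‖⁻¹ * ε := mul_pos (inv_pos.2 (norm_pos_iff.2 hwne)) hε
  linarith

lemma inner_combo {n : ℕ} (x p q : Euc n) (t : ℝ) :
    ⟪x, (1 - t) • p + t • q⟫ = (1 - t) * ⟪x, p⟫ + t * ⟪x, q⟫ := by
  rw [inner_add_right, real_inner_smul_right, real_inner_smul_right]

lemma centralProj_combo {n : ℕ} {x p q : Euc n} (hp : 0 < ⟪x, p⟫) (hq : 0 < ⟪x, q⟫)
    {t : ℝ} (ht : t ∈ Set.Icc (0:ℝ) 1) :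
    centralProj x ((1 - t) • p + t • q)
      = ((1 - t) * ⟪x, p⟫ / ((1 - t) * ⟪x, p⟫ + t * ⟪x, q⟫)) • centralProj x p
        + (t * ⟪x, q⟫ / ((1 - t) * ⟪x, p⟫ + t * ⟪x, q⟫)) • centralProj x q := by
  rw [centralProj, centralProj, centralProj, inner_combo]
  set A := ⟪x, p⟫ with hA
  set B := ⟪x, q⟫ with hB
  have hD : 0 < (1 - t) * A + t * B := combo_pos hp hq ht
  simp only [smul_add, smul_smul]
  congr 1
  · congr 1
    rw [div_mul_eq_mul_div, mul_assoc, mul_inv_cancel₀ hp.ne', mul_one, inv_mul_eq_div]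
  · congr 1
    rw [div_mul_eq_mul_div, mul_assoc, mul_inv_cancel₀ hq.ne', mul_one, inv_mul_eq_div]

lemma segment_param {cp cq a b : ℝ} (hp : 0 < cp) (hq : 0 < cq) (ha : 0 ≤ a) (hb : 0 ≤ b)
    (hab : a + b = 1) :
    ∃ t ∈ Set.Icc (0:ℝ) 1,
      (1 - t) * cp / ((1 - t) * cp + t * cq) = a ∧ t * cq / ((1 - t) * cp + t * cq) = b := by
  have hE : 0 < a * cq + b * cp := by
    rcases ha.lt_or_eq with h | h
    · nlinarith [mul_pos h hq, mul_nonneg hb hp.le]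
    · have hb1 : b = 1 := by linarith
      rw [← h, hb1]; simpa using hp
  have h1t : 1 - b * cp / (a * cq + b * cp) = a * cq / (a * cq + b * cp) := by
    rw [eq_div_iff hE.ne', sub_mul, div_mul_cancel₀ _ hE.ne']
    ring
  have hD : (1 - b * cp / (a * cq + b * cp)) * cp + b * cp / (a * cq + b * cp) * cq
      = cp * cq / (a * cq + b * cp) := by
    rw [h1t, div_mul_eq_mul_div, div_mul_eq_mul_div, ← add_div]
    congr 1
    linear_combination cp * cq * hab
  have hcpq : cp * cq / (a * cq + b * cp) ≠ 0 := by positivity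
  refine ⟨b * cp / (a * cq + b * cp), ⟨by positivity, ?_⟩, ?_, ?_⟩
  · rw [div_le_one hE]; nlinarith
  · rw [hD, h1t, div_eq_iff hcpq, div_mul_eq_mul_div, ← mul_div_assoc]
    congr 1
    ring
  · rw [hD, div_eq_iff hcpq, div_mul_eq_mul_div, ← mul_div_assoc]
    congr 1
    ring

/-- Relative interior of a subset of the hyperplane `{z | ⟪x,z⟫ = 1}`, ambient description. -/
def relInt {n : ℕ} (x : Euc n) (s : Set (Euc n)) : Set (Euc n) :=
  {z | ⟪x, z⟫ = 1 ∧ ∃ W : Set (Euc n), IsOpen W ∧ z ∈ W ∧ ∀ y ∈ W, ⟪x, y⟫ = 1 → y ∈ s}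

lemma projK_subset_hyp {d : ℕ} {K : Set (Euc (d + 1))} {x : Euc (d + 1)}
    (hpos : ∀ y ∈ K, 0 < ⟪x, y⟫) :
    centralProj x '' K ⊆ {z | ⟪x, z⟫ = 1} := by
  rintro _ ⟨y, hy, rfl⟩
  exact inner_centralProj (hpos y hy).ne'

lemma isCompact_projK {d : ℕ} {K : Set (Euc (d + 1))} {x : Euc (d + 1)}
    (hKc : IsCompact K) (hpos : ∀ y ∈ K, 0 < ⟪x, y⟫) :
    IsCompact (centralProj x '' K) :=
  hKc.image_of_continuousOn ((continuousOn_centralProj x).mono (fun y hy => hpos y hy))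

lemma projK_eq_iff {d : ℕ} {K : Set (Euc (d + 1))} {x : Euc (d + 1)}
    (hKs : K ⊆ uSphere d) (hpos : ∀ y ∈ K, 0 < ⟪x, y⟫) {y : Euc (d + 1)}
    (hy : y ∈ uSphere d) (hyx : 0 < ⟪x, y⟫) :
    centralProj x y ∈ centralProj x '' K ↔ y ∈ K := by
  constructor
  · rintro ⟨k, hk, heq⟩
    have h2 : y = nproj (centralProj x y) :=
      (nproj_centralProj (mem_uSphere_iff.1 hy) hyx).symm
    have h3 : nproj (centralProj x k) = k :=
      nproj_centralProj (mem_uSphere_iff.1 (hKs hk)) (hpos k hk)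
    have h4 : y = k := by rw [h2, ← heq, h3]
    rwa [h4]
  · exact fun h => ⟨y, h, rfl⟩

lemma convex_projK {d : ℕ} {K : Set (Euc (d + 1))} {x : Euc (d + 1)}
    (hK : IsSphBody d K) (hpos : ∀ y ∈ K, 0 < ⟪x, y⟫) :
    Convex ℝ (centralProj x '' K) := by
  rintro z1 hz1 z2 hz2 a b ha hb hab
  obtain ⟨p, hp, rfl⟩ := hz1
  obtain ⟨q, hq, rfl⟩ := hz2
  have hcp := hpos p hp
  have hcq := hpos q hq
  obtain ⟨t, ht, hta, htb⟩ := segment_param hcp hcq ha hb hab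
  have harc : nproj ((1 - t) • p + t • q) ∈ K :=
    hK.2.1.2.2 p hp q hq ⟨t, ht, rfl⟩
  refine ⟨nproj ((1 - t) • p + t • q), harc, ?_⟩
  have hD : 0 < (1 - t) * ⟪x, p⟫ + t * ⟪x, q⟫ := combo_pos hcp hcq ht
  have hw : ((1 - t) • p + t • q : Euc (d + 1)) ≠ 0 := by
    intro h0
    have h1 := inner_combo x p q t
    rw [h0, inner_zero_right] at h1
    linarith
  rw [centralProj_nproj _ hw, centralProj_combo hcp hcq ht, hta, htb]

/-- The tangent hyperplane as an affine subspace. -/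
noncomputable def hypAff {n : ℕ} (x : Euc n) : AffineSubspace ℝ (Euc n) where
  carrier := {z | ⟪x, z⟫ = 1}
  smul_vsub_vadd_mem' := by
    intro c p1 p2 p3 h1 h2 h3
    simp only [Set.mem_setOf_eq] at *
    rw [vsub_eq_sub, vadd_eq_add, inner_add_right, real_inner_smul_right, inner_sub_right,
      h1, h2, h3]
    ring

lemma mem_hypAff {n : ℕ} {x z : Euc n} : z ∈ hypAff x ↔ ⟪x, z⟫ = 1 := Iff.rfl

lemma span_projK {d : ℕ} {K : Set (Euc (d + 1))} {x : Euc (d + 1)}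
    (hK : IsSphBody d K) (hpos : ∀ y ∈ K, 0 < ⟪x, y⟫) :
    (affineSpan ℝ (centralProj x '' K) : Set (Euc (d + 1))) = {z | ⟪x, z⟫ = 1} := by
  apply Set.Subset.antisymm
  · exact fun z hz => (affineSpan_le (Q := hypAff x)).2 (projK_subset_hyp hpos) hz
  · intro z hz
    obtain ⟨q0, hq0⟩ := hK.2.2
    obtain ⟨hq0S, U, hU, hq0U, hUK⟩ := hq0
    have hq0K : q0 ∈ K := hUK ⟨hq0U, hq0S⟩
    have hc0 : 0 < ⟪x, q0⟫ := hpos q0 hq0K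
    have hq0n : ‖q0‖ = 1 := mem_uSphere_iff.1 hq0S
    set f0 : Euc (d + 1) := centralProj x q0 with hf0
    have hf0K : f0 ∈ centralProj x '' K := ⟨q0, hq0K, rfl⟩
    have hf0A : f0 ∈ affineSpan ℝ (centralProj x '' K) := subset_affineSpan ℝ _ hf0K
    have hif0 : ⟪x, f0⟫ = 1 := inner_centralProj hc0.ne'
    set w : Euc (d + 1) := z - f0 with hwdef
    have hiw : ⟪x, w⟫ = 0 := by rw [hwdef, inner_sub_right, hz, hif0]; ring
    -- find small ε with f0 + ε • w ∈ centralProj x '' K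
    have hf0ne : f0 ≠ 0 := centralProj_ne_zero_inner (x := x) (by rw [hif0]; norm_num)
    have hgcont : Continuous (fun ε : ℝ => f0 + ε • w) :=
      continuous_const.add (continuous_id.smul continuous_const)
    have hF : ContinuousAt (fun ε : ℝ => nproj (f0 + ε • w)) 0 := by
      exact ContinuousAt.comp (g := nproj) (f := fun ε : ℝ => f0 + ε • w) (x := (0:ℝ))
        (continuousAt_nproj (w := f0 + (0:ℝ) • w) (by simpa using hf0ne))
        hgcont.continuousAt
    have hmem : {ε : ℝ | nproj (f0 + ε • w) ∈ U} ∈ nhds (0:ℝ) := by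
      apply hF.preimage_mem_nhds
      have : nproj (f0 + (0:ℝ) • w) = q0 := by
        simp only [zero_smul, add_zero]
        rw [hf0, nproj_centralProj hq0n hc0]
      rw [this]
      exact hU.mem_nhds hq0U
    obtain ⟨ε, hε, hεU⟩ := exists_pos_mem_nhds_zero hmem
    set v : Euc (d + 1) := f0 + ε • w with hv
    have hiv : ⟪x, v⟫ = 1 := by
      rw [hv, inner_add_right, real_inner_smul_right, hif0, hiw]; ring
    have hvne : v ≠ 0 := centralProj_ne_zero_inner (x := x) (by rw [hiv]; norm_num)
    have hvS : nproj v ∈ uSphere d := mem_uSphere_iff.2 (norm_nproj hvne)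
    have hvK : nproj v ∈ K := hUK ⟨hεU, hvS⟩
    have hvimg : v ∈ centralProj x '' K := by
      refine ⟨nproj v, hvK, ?_⟩
      rw [centralProj_nproj _ hvne, centralProj_of_inner_one hiv]
    have hvA : v ∈ affineSpan ℝ (centralProj x '' K) := subset_affineSpan ℝ _ hvimg
    have hεw : ε • w ∈ (affineSpan ℝ (centralProj x '' K)).direction := by
      have := AffineSubspace.vsub_mem_direction hvA hf0A
      rwa [vsub_eq_sub, hv, add_sub_cancel_left] at this
    have hwdir : w ∈ (affineSpan ℝ (centralProj x '' K)).direction := by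
      have := Submodule.smul_mem _ ε⁻¹ hεw
      rwa [smul_smul, inv_mul_cancel₀ hε.ne', one_smul] at this
    have : w +ᵥ f0 ∈ affineSpan ℝ (centralProj x '' K) :=
      AffineSubspace.vadd_mem_of_mem_direction hwdir hf0A
    have hzz : w +ᵥ f0 = z := by rw [vadd_eq_add, hwdef]; abel
    rw [hzz] at this
    exact this

lemma continuousOn_nproj {n : ℕ} (x : Euc n) :
    ContinuousOn nproj {y : Euc n | 0 < ⟪x, y⟫} := fun y hy =>
  (continuousAt_nproj (centralProj_ne_zero_inner (x := x) (ne_of_gt hy))).continuousWithinAt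

lemma relInt_eq_intrinsic {d : ℕ} {K : Set (Euc (d + 1))} {x : Euc (d + 1)}
    (hK : IsSphBody d K) (hpos : ∀ y ∈ K, 0 < ⟪x, y⟫) :
    relInt x (centralProj x '' K) = intrinsicInterior ℝ (centralProj x '' K) := by
  set s := centralProj x '' K with hs
  have hA : (affineSpan ℝ s : Set (Euc (d + 1))) = {z | ⟪x, z⟫ = 1} := span_projK hK hpos
  apply Set.Subset.antisymm
  · rintro z ⟨hz1, W, hW, hzW, hWs⟩
    have hzA : z ∈ affineSpan ℝ s := by
      rw [← SetLike.mem_coe, hA]; exact hz1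
    refine ⟨⟨z, hzA⟩, ?_, rfl⟩
    apply mem_interior.2
    refine ⟨Subtype.val ⁻¹' W, ?_, hW.preimage continuous_subtype_val, hzW⟩
    rintro ⟨y, hyA⟩ hyW
    have hy1 : ⟪x, y⟫ = 1 := by
      have : y ∈ (affineSpan ℝ s : Set (Euc (d + 1))) := hyA
      rwa [hA] at this
    exact hWs y hyW hy1
  · rintro z ⟨a, ha, rfl⟩
    have hz1 : ⟪x, (a : Euc (d + 1))⟫ = 1 := by
      have : (a : Euc (d + 1)) ∈ (affineSpan ℝ s : Set (Euc (d + 1))) := a.2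
      rwa [hA] at this
    obtain ⟨o, hos, hoo, hao⟩ := mem_interior.1 ha
    obtain ⟨W, hW, hWo⟩ := isOpen_induced_iff.1 hoo
    refine ⟨hz1, W, hW, ?_, ?_⟩
    · have : a ∈ Subtype.val ⁻¹' W := by rw [hWo]; exact hao
      exact this
    · intro y hyW hy1
      have hyA : y ∈ affineSpan ℝ s := by
        rw [← SetLike.mem_coe, hA]; exact hy1
      have : (⟨y, hyA⟩ : affineSpan ℝ s) ∈ o := by
        rw [← hWo]; exact hyW
      exact hos this

lemma intrinsicFrontier_iff_projK {d : ℕ} {K : Set (Euc (d + 1))} {x : Euc (d + 1)}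
    (hK : IsSphBody d K) (hpos : ∀ y ∈ K, 0 < ⟪x, y⟫) {z : Euc (d + 1)}
    (hz : z ∈ centralProj x '' K) :
    z ∈ intrinsicFrontier ℝ (centralProj x '' K) ↔ z ∉ relInt x (centralProj x '' K) := by
  set s := centralProj x '' K with hs
  have hcl : IsClosed (Subtype.val ⁻¹' s : Set (affineSpan ℝ s)) :=
    (isCompact_projK hK.1 hpos).isClosed.preimage continuous_subtype_val
  rw [relInt_eq_intrinsic hK hpos]
  constructor
  · rintro ⟨a, ha, rfl⟩ ⟨a', ha', heq⟩
    have : a' = a := Subtype.coe_injective heq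
    rw [this] at ha'
    rw [hcl.frontier_eq] at ha
    exact ha.2 ha'
  · intro hni
    have hzA : z ∈ affineSpan ℝ s := subset_affineSpan ℝ s hz
    refine ⟨⟨z, hzA⟩, ?_, rfl⟩
    rw [hcl.frontier_eq]
    refine ⟨hz, fun hi => hni ⟨⟨z, hzA⟩, hi, rfl⟩⟩

lemma mem_relInt_of_sphInt {d : ℕ} {K : Set (Euc (d + 1))} {x : Euc (d + 1)}
    (hKs : K ⊆ uSphere d) (hpos : ∀ y ∈ K, 0 < ⟪x, y⟫) {q : Euc (d + 1)}
    (hq : q ∈ sphInt d K) :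
    centralProj x q ∈ relInt x (centralProj x '' K) := by
  obtain ⟨hqS, U, hU, hqU, hUK⟩ := hq
  have hqK : q ∈ K := hUK ⟨hqU, hqS⟩
  have hcq : 0 < ⟪x, q⟫ := hpos q hqK
  have hq1 : ‖q‖ = 1 := mem_uSphere_iff.1 hqS
  refine ⟨inner_centralProj hcq.ne', {y | 0 < ⟪x, y⟫} ∩ nproj ⁻¹' U,
    (continuousOn_nproj x).isOpen_inter_preimage (isOpen_posInner x) hU, ?_, ?_⟩
  · constructor
    · show 0 < ⟪x, centralProj x q⟫
      rw [inner_centralProj hcq.ne']; norm_num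
    · show nproj (centralProj x q) ∈ U
      rw [nproj_centralProj hq1 hcq]; exact hqU
  · rintro y ⟨hy0, hyU⟩ hy1
    have hyne : y ≠ 0 := centralProj_ne_zero_inner (x := x) (ne_of_gt hy0)
    have hnS : nproj y ∈ uSphere d := mem_uSphere_iff.2 (norm_nproj hyne)
    have hnK : nproj y ∈ K := hUK ⟨hyU, hnS⟩
    exact ⟨nproj y, hnK, by rw [centralProj_nproj _ hyne, centralProj_of_inner_one hy1]⟩

lemma sphInt_of_mem_relInt {d : ℕ} {K : Set (Euc (d + 1))} {x : Euc (d + 1)}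
    (hKs : K ⊆ uSphere d) (hpos : ∀ y ∈ K, 0 < ⟪x, y⟫) {y : Euc (d + 1)}
    (hyS : y ∈ uSphere d) (hyx : 0 < ⟪x, y⟫)
    (h : centralProj x y ∈ relInt x (centralProj x '' K)) :
    y ∈ sphInt d K := by
  obtain ⟨hz1, W, hW, hzW, hWs⟩ := h
  refine ⟨hyS, {w | 0 < ⟪x, w⟫} ∩ (centralProj x) ⁻¹' W,
    (continuousOn_centralProj x).isOpen_inter_preimage (isOpen_posInner x) hW,
    ⟨hyx, hzW⟩, ?_⟩
  rintro w ⟨⟨hw0, hwW⟩, hwS⟩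
  have hw1 : ⟪x, centralProj x w⟫ = 1 := inner_centralProj (ne_of_gt hw0)
  obtain ⟨k, hk, heq⟩ := hWs _ hwW hw1
  have : w = k := by
    rw [← nproj_centralProj (mem_uSphere_iff.1 hwS) hw0, ← heq,
      nproj_centralProj (mem_uSphere_iff.1 (hKs hk)) (hpos k hk)]
  rwa [this]

lemma relInt_combo {n : ℕ} {x : Euc n} {s : Set (Euc n)} (hconv : Convex ℝ s)
    (hsub : s ⊆ {z | ⟪x, z⟫ = 1}) {θ : ℝ} (hθ : θ ∈ Set.Ioo (0:ℝ) 1) {z1 z2 : Euc n}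
    (h1 : z1 ∈ relInt x s) (h2 : z2 ∈ s) : θ • z1 + (1 - θ) • z2 ∈ relInt x s := by
  obtain ⟨hz1, W, hW, hzW, hWs⟩ := h1
  have hz2 : ⟪x, z2⟫ = 1 := hsub h2
  have hθ0 := hθ.1
  have hθ1 := hθ.2
  refine ⟨?_, (fun y => θ⁻¹ • (y - (1 - θ) • z2)) ⁻¹' W,
    hW.preimage (show Continuous (fun y : Euc n => θ⁻¹ • (y - (1 - θ) • z2)) from
      (continuous_id.sub continuous_const).const_smul θ⁻¹), ?_, ?_⟩
  · rw [inner_add_right, real_inner_smul_right, real_inner_smul_right, hz1, hz2]; ring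
  · show θ⁻¹ • (θ • z1 + (1 - θ) • z2 - (1 - θ) • z2) ∈ W
    rw [add_sub_cancel_right, smul_smul, inv_mul_cancel₀ hθ0.ne', one_smul]
    exact hzW
  · intro y hyW hy1
    set u : Euc n := θ⁻¹ • (y - (1 - θ) • z2) with hu
    have hu1 : ⟪x, u⟫ = 1 := by
      rw [hu, real_inner_smul_right, inner_sub_right, real_inner_smul_right, hy1, hz2]
      field_simp; ring
    have hus : u ∈ s := hWs u hyW hu1
    have hyu : y = θ • u + (1 - θ) • z2 := by
      rw [hu, smul_smul, mul_inv_cancel₀ hθ0.ne', one_smul, sub_add_cancel]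
    rw [hyu]
    exact hconv hus h2 hθ0.le (by linarith) (by ring)

/-- The direction hyperplane `{w | ⟪x,w⟫ = 0}` as a submodule. -/
noncomputable def hypDir {n : ℕ} (x : Euc n) : Submodule ℝ (Euc n) where
  carrier := {w | ⟪x, w⟫ = 0}
  add_mem' := by
    intro a b ha hb
    simp only [Set.mem_setOf_eq] at *
    rw [inner_add_right, ha, hb]; ring
  zero_mem' := by simp
  smul_mem' := by
    intro c a ha
    simp only [Set.mem_setOf_eq] at *
    rw [real_inner_smul_right, ha]; ring

lemma direction_projK {d : ℕ} {K : Set (Euc (d + 1))} {x : Euc (d + 1)}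
    (hK : IsSphBody d K) (hpos : ∀ y ∈ K, 0 < ⟪x, y⟫) :
    (affineSpan ℝ (centralProj x '' K)).direction = hypDir x := by
  set s := centralProj x '' K with hs
  have hA : (affineSpan ℝ s : Set (Euc (d + 1))) = {z | ⟪x, z⟫ = 1} := span_projK hK hpos
  apply le_antisymm
  · rw [direction_affineSpan, vectorSpan_def]
    apply Submodule.span_le.2
    rintro w hw
    obtain ⟨a, ha, b, hb, rfl⟩ := Set.mem_vsub.1 hw
    have ha1 : ⟪x, a⟫ = 1 := projK_subset_hyp hpos ha
    have hb1 : ⟪x, b⟫ = 1 := projK_subset_hyp hpos hb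
    show ⟪x, a -ᵥ b⟫ = 0
    rw [vsub_eq_sub, inner_sub_right, ha1, hb1]; ring
  · intro w hw
    have hw0 : ⟪x, w⟫ = 0 := hw
    obtain ⟨q0, hq0⟩ := hK.2.2
    have hq0K : q0 ∈ K := sphInt_subset hq0
    have hf0 : centralProj x q0 ∈ s := ⟨q0, hq0K, rfl⟩
    have hf0A : centralProj x q0 ∈ affineSpan ℝ s := subset_affineSpan ℝ s hf0
    have hsum : w + centralProj x q0 ∈ affineSpan ℝ s := by
      rw [← SetLike.mem_coe, hA]
      show ⟪x, w + centralProj x q0⟫ = 1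
      rw [inner_add_right, hw0, inner_centralProj (hpos q0 hq0K).ne']; ring
    have := AffineSubspace.vsub_mem_direction hsum hf0A
    rwa [vsub_eq_sub, add_sub_cancel_right] at this

lemma centralProj_linepoint {n : ℕ} {x v q : Euc n} (hv : ⟪x, v⟫ = 0) (hq : 0 < ⟪x, q⟫)
    {tt : ℝ} (htt : 0 < tt) :
    centralProj x ((1 - tt) • (-v) + tt • q)
      = centralProj x q + ((1 - tt) / (tt * ⟪x, q⟫)) • (-v) := by
  have hw : ⟪x, (1 - tt) • (-v) + tt • q⟫ = tt * ⟪x, q⟫ := by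
    rw [inner_combo, inner_neg_right, hv]; ring
  rw [centralProj, centralProj, hw]
  set A := ⟪x, q⟫ with hA
  have hAne : A ≠ 0 := hq.ne'
  have httne : tt ≠ 0 := htt.ne'
  match_scalars <;> field_simp <;> ring

lemma sphIllum_le_intIllum {d : ℕ} {K : Set (Euc (d + 1))} {x : Euc (d + 1)}
    (hK : IsSphBody d K) (hx : x ∈ uSphere d) (hxi : -x ∈ sphInt d (sphPolar d K)) :
    sphIllumNumber d K ≤ intIllumNumber (centralProj x '' K) := by
  classical
  have hKs : K ⊆ uSphere d := hK.2.1.1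
  have hpos := pos_of_polarInt hKs hxi
  set s := centralProj x '' K with hs
  have hconv : Convex ℝ s := convex_projK hK hpos
  have hsubhyp : s ⊆ {z | ⟪x, z⟫ = 1} := projK_subset_hyp hpos
  apply le_sInf
  rintro m ⟨D, hD1, hD2, hDcard⟩
  set S : Finset (Euc (d + 1)) := D.image (fun v => -v) with hS
  -- each v in D has zero inner product with x
  have hvdir : ∀ v ∈ D, ⟪x, v⟫ = 0 := by
    intro v hv
    have := (hD1 v hv).2
    rw [direction_projK hK hpos] at this
    exact this
  have hdisj : greatSphere d x ∩ K = ∅ := by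
    rw [Set.eq_empty_iff_forall_notMem]
    rintro y ⟨⟨hyS, hy0⟩, hyK⟩
    exact absurd hy0 (hpos y hyK).ne'
  have hSsub : ↑S ⊆ greatSphere d x := by
    intro p hp
    obtain ⟨v, hv, rfl⟩ := Finset.mem_image.1 (Finset.mem_coe.1 hp)
    refine ⟨mem_uSphere_iff.2 (by rw [norm_neg, (hD1 v hv).1]), ?_⟩
    show ⟪x, -v⟫ = 0
    rw [inner_neg_right, hvdir v hv]; ring
  have hSill : SphIlluminates d K ↑S := by
    rintro q ⟨hqK, hqni⟩
    have hcq : 0 < ⟪x, q⟫ := hpos q hqK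
    have hfqs : centralProj x q ∈ s := ⟨q, hqK, rfl⟩
    have hfqni : centralProj x q ∉ relInt x s := fun h =>
      hqni (sphInt_of_mem_relInt hKs hpos (hKs hqK) hcq h)
    have hfront : centralProj x q ∈ intrinsicFrontier ℝ s :=
      (intrinsicFrontier_iff_projK hK hpos hfqs).2 hfqni
    obtain ⟨v, hv, t, ht, hint⟩ := hD2 (centralProj x q) hfront
    have hintr : centralProj x q + t • v ∈ relInt x s := by
      rw [relInt_eq_intrinsic hK hpos]; exact hint
    have hv0 : ⟪x, v⟫ = 0 := hvdir v hv
    refine ⟨-v, Finset.mem_coe.2 (Finset.mem_image_of_mem _ hv), ?_, ?_, ?_⟩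
    · -- q ≠ -(-v)
      rw [neg_neg]
      intro hqv
      rw [hqv, hv0] at hcq
      exact lt_irrefl 0 hcq
    · -- the segment from -v to q misses the interior
      rw [Set.eq_empty_iff_forall_notMem]
      rintro z ⟨⟨tt, htt, rfl⟩, hzint⟩
      set w : Euc (d + 1) := (1 - tt) • (-v) + tt • q with hw
      have hzK : nproj w ∈ K := sphInt_subset hzint
      have hcz : 0 < ⟪x, nproj w⟫ := hpos _ hzK
      have hwne : w ≠ 0 := by
        intro h0
        rw [h0] at hcz
        simp [nproj] at hcz
      have hiw : ⟪x, w⟫ = tt * ⟪x, q⟫ := by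
        rw [hw, inner_combo, inner_neg_right, hv0]; ring
      have htt0 : 0 < tt := by
        by_contra hle
        push_neg at hle
        have h1 : ⟪x, nproj w⟫ = ‖w‖⁻¹ * ⟪x, w⟫ := inner_nproj x w
        have h2 : ⟪x, w⟫ ≤ 0 := by
          rw [hiw]
          exact mul_nonpos_of_nonpos_of_nonneg hle hcq.le
        have h3 : 0 ≤ ‖w‖⁻¹ := by positivity
        nlinarith
      have hfz : centralProj x (nproj w) ∈ relInt x s :=
        mem_relInt_of_sphInt hKs hpos hzint
      have hfzeq : centralProj x (nproj w)
          = centralProj x q + ((1 - tt) / (tt * ⟪x, q⟫)) • (-v) := by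
        rw [centralProj_nproj _ hwne, hw, centralProj_linepoint hv0 hcq htt0]
      set τ : ℝ := (1 - tt) / (tt * ⟪x, q⟫) with hτ
      have hτ0 : 0 ≤ τ := by
        apply div_nonneg
        · linarith [htt.2]
        · positivity
      rcases hτ0.lt_or_eq with hτpos | hτzero
      · have hz2 : centralProj x (nproj w) ∈ s := by
          have h5 := hfz
          rw [relInt_eq_intrinsic hK hpos] at h5
          exact intrinsicInterior_subset h5
        have hθ : τ / (t + τ) ∈ Set.Ioo (0:ℝ) 1 := by
          constructor
          · exact div_pos hτpos (by linarith)
          · rw [div_lt_one (by linarith)]; linarith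
        have hne : t + τ ≠ 0 := by positivity
        have hcombo : (τ / (t + τ)) • (centralProj x q + t • v)
            + (1 - τ / (t + τ)) • (centralProj x (nproj w)) = centralProj x q := by
          rw [hfzeq]
          have h1τ : 1 - τ / (t + τ) = t / (t + τ) := by field_simp; ring
          rw [h1τ]
          match_scalars <;> field_simp <;> ring
        have : centralProj x q ∈ relInt x s := by
          rw [← hcombo]
          exact relInt_combo hconv hsubhyp hθ hintr hz2
        exact hfqni this
      · rw [← hτzero, zero_smul, add_zero] at hfzeq
        rw [hfzeq] at hfz
        exact hfqni hfz
    · -- the great circle meets the interior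
      set z' : Euc (d + 1) := centralProj x q + t • v with hz'
      have hiz' : ⟪x, z'⟫ = 1 := by
        rw [hz', inner_add_right, real_inner_smul_right, inner_centralProj hcq.ne', hv0]; ring
      have hz'ne : z' ≠ 0 := centralProj_ne_zero_inner (x := x) (by rw [hiz']; norm_num)
      refine ⟨nproj z', ⟨mem_uSphere_iff.2 (norm_nproj hz'ne), ?_⟩, ?_⟩
      · rw [Submodule.mem_span_pair]
        refine ⟨-(‖z'‖⁻¹ * t), ‖z'‖⁻¹ * (⟪x, q⟫)⁻¹, ?_⟩
        show (-(‖z'‖⁻¹ * t)) • (-v) + (‖z'‖⁻¹ * (⟪x, q⟫)⁻¹) • q = nproj z'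
        rw [nproj, hz', centralProj]
        match_scalars <;> ring
      · apply sphInt_of_mem_relInt hKs hpos (mem_uSphere_iff.2 (norm_nproj hz'ne))
        · rw [inner_nproj, hiz', mul_one]
          exact inv_pos.2 (norm_pos_iff.2 hz'ne)
        · rw [centralProj_nproj _ hz'ne, centralProj_of_inner_one hiz']
          exact hintr
  calc sphIllumNumber d K ≤ (S.card : ℕ∞) :=
        sInf_le ⟨x, hx, hdisj, S, hSsub, hSill, rfl⟩
    _ ≤ (D.card : ℕ∞) := Nat.cast_le.2 Finset.card_image_le
    _ = m := hDcard

lemma isPreconnected_body {d : ℕ} {K : Set (Euc (d + 1))} (hK : IsSphBody d K) :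
    IsPreconnected K := by
  obtain ⟨x0, hx0S, hx0H⟩ := hK.2.1.2.1
  have hx0pos : ∀ y ∈ K, 0 < ⟪x0, y⟫ := fun y hy => (hx0H hy).2
  obtain ⟨q0, hq0i⟩ := hK.2.2
  have hq0K : q0 ∈ K := sphInt_subset hq0i
  have hq0n : ‖q0‖ = 1 := mem_uSphere_iff.1 (hK.2.1.1 hq0K)
  have harcpre : ∀ q ∈ K, IsPreconnected (sphSeg q0 q) := by
    intro q hq
    apply (isPreconnected_Icc (a := (0:ℝ)) (b := 1)).image
    intro t ht
    have hcomb : ((1 - t) • q0 + t • q : Euc (d + 1)) ≠ 0 := by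
      intro h0
      have h1 := inner_combo x0 q0 q t
      rw [h0, inner_zero_right] at h1
      have h2 := combo_pos (hx0pos q0 hq0K) (hx0pos q hq) ht
      linarith
    have hgc : Continuous (fun t : ℝ => (1 - t) • q0 + t • q) :=
      ((continuous_const.sub continuous_id).smul continuous_const).add
        (continuous_id.smul continuous_const)
    exact (ContinuousAt.comp (x := t) (continuousAt_nproj hcomb)
      hgc.continuousAt).continuousWithinAt
  have hmem0 : ∀ q ∈ K, q0 ∈ sphSeg q0 q := by
    intro q hq
    refine ⟨0, ⟨le_refl 0, zero_le_one⟩, ?_⟩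
    simp only [sub_zero, one_smul, zero_smul, add_zero]
    exact nproj_eq_self hq0n
  have hmem1 : ∀ q ∈ K, q ∈ sphSeg q0 q := by
    intro q hq
    refine ⟨1, ⟨zero_le_one, le_refl 1⟩, ?_⟩
    simp only [sub_self, zero_smul, one_smul, zero_add]
    exact nproj_eq_self (mem_uSphere_iff.1 (hK.2.1.1 hq))
  have hU : K = ⋃₀ ((fun q => sphSeg q0 q) '' K) := by
    apply Set.Subset.antisymm
    · intro q hq
      exact ⟨sphSeg q0 q, ⟨q, hq, rfl⟩, hmem1 q hq⟩
    · rintro z ⟨_, ⟨q, hq, rfl⟩, hz⟩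
      exact hK.2.1.2.2 q0 hq0K q hq hz
  rw [hU]
  apply isPreconnected_sUnion q0
  · rintro _ ⟨q, hq, rfl⟩
    exact hmem0 q hq
  · rintro _ ⟨q, hq, rfl⟩
    exact harcpre q hq

lemma sign_const {d : ℕ} {K : Set (Euc (d + 1))} (hK : IsSphBody d K) {u : Euc (d + 1)}
    (hdisj : greatSphere d u ∩ K = ∅) :
    (∀ y ∈ K, ⟪u, y⟫ < 0) ∨ (∀ y ∈ K, 0 < ⟪u, y⟫) := by
  have hne0 : ∀ y ∈ K, ⟪u, y⟫ ≠ 0 := by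
    intro y hy h0
    rw [Set.eq_empty_iff_forall_notMem] at hdisj
    exact hdisj y ⟨⟨hK.2.1.1 hy, h0⟩, hy⟩
  by_cases hall : ∀ y ∈ K, ⟪u, y⟫ < 0
  · exact Or.inl hall
  right
  push_neg at hall
  obtain ⟨y2, hy2K, hy2⟩ := hall
  have hy2pos : 0 < ⟪u, y2⟫ := lt_of_le_of_ne hy2 (Ne.symm (hne0 y2 hy2K))
  intro y hy
  by_contra hle
  push_neg at hle
  have hyneg : ⟪u, y⟫ < 0 := lt_of_le_of_ne hle (hne0 y hy)
  have hpre := (isPreconnected_body hK).image (fun z => ⟪u, z⟫)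
    ((Continuous.inner continuous_const continuous_id).continuousOn)
  have h0mem : (0:ℝ) ∈ (fun z => ⟪u, z⟫) '' K :=
    hpre.Icc_subset ⟨y, hy, rfl⟩ ⟨y2, hy2K, rfl⟩ ⟨hyneg.le, hy2pos.le⟩
  obtain ⟨z, hzK, hz0⟩ := h0mem
  exact hne0 z hzK hz0

lemma neg_mem_sphInt_polar {d : ℕ} {K : Set (Euc (d + 1))} (hK : IsSphBody d K)
    {x : Euc (d + 1)} (hxS : x ∈ uSphere d) (hpos : ∀ y ∈ K, 0 < ⟪x, y⟫) :
    -x ∈ sphInt d (sphPolar d K) := by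
  obtain ⟨q0, hq0i⟩ := hK.2.2
  have hq0K : q0 ∈ K := sphInt_subset hq0i
  obtain ⟨y0, hy0K, hmin⟩ := hK.1.exists_isMinOn (f := fun y : Euc (d+1) => ⟪x, y⟫) ⟨q0, hq0K⟩
    ((Continuous.inner continuous_const continuous_id).continuousOn (s := K))
  rw [isMinOn_iff] at hmin
  set δ : ℝ := ⟪x, y0⟫ with hδ
  have hδpos : 0 < δ := hpos y0 hy0K
  refine ⟨mem_uSphere_iff.2 (by rw [norm_neg]; exact mem_uSphere_iff.1 hxS),
    Metric.ball (-x) δ, Metric.isOpen_ball, Metric.mem_ball_self hδpos, ?_⟩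
  rintro w ⟨hwB, hwS⟩
  refine ⟨hwS, ?_⟩
  intro y hy
  have h1 : ‖w + x‖ < δ := by
    have := Metric.mem_ball.1 hwB
    rwa [dist_eq_norm, sub_neg_eq_add] at this
  have h2 : ⟪w + x, y⟫ ≤ ‖w + x‖ * ‖y‖ := real_inner_le_norm _ _
  have hy1 : ‖y‖ = 1 := mem_uSphere_iff.1 (hK.2.1.1 hy)
  have h3 : δ ≤ ⟪x, y⟫ := hmin y hy
  have h4 : ⟪w, y⟫ = ⟪w + x, y⟫ - ⟪x, y⟫ := by rw [inner_add_left]; ring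
  rw [h4]
  rw [hy1, mul_one] at h2
  linarith

lemma intIllum_le_card {d : ℕ} {K : Set (Euc (d + 1))} {x : Euc (d + 1)}
    (hK : IsSphBody d K) (hpos : ∀ y ∈ K, 0 < ⟪x, y⟫) (S : Finset (Euc (d + 1)))
    (hS0 : ∀ p ∈ S, p ∈ uSphere d ∧ ⟪x, p⟫ = 0) (hSill : SphIlluminates d K ↑S) :
    intIllumNumber (centralProj x '' K) ≤ (S.card : ℕ∞) := by
  classical
  have hKs : K ⊆ uSphere d := hK.2.1.1
  set s := centralProj x '' K with hs
  set D : Finset (Euc (d + 1)) := S.image (fun p => -p) with hD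
  have h1 : ∀ v ∈ D, ‖v‖ = 1 ∧ v ∈ (affineSpan ℝ s).direction := by
    intro v hv
    obtain ⟨p, hp, rfl⟩ := Finset.mem_image.1 hv
    constructor
    · rw [norm_neg]; exact mem_uSphere_iff.1 (hS0 p hp).1
    · rw [direction_projK hK hpos]
      show ⟪x, -p⟫ = 0
      rw [inner_neg_right, (hS0 p hp).2]; ring
  have h2 : ∀ p' ∈ intrinsicFrontier ℝ s, ∃ v ∈ D, ∃ t : ℝ, 0 < t ∧
      p' + t • v ∈ intrinsicInterior ℝ s := by
    intro p' hp'
    have hp's : p' ∈ s := intrinsicFrontier_subset (isCompact_projK hK.1 hpos).isClosed hp'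
    obtain ⟨q, hqK, rfl⟩ := hp's
    have hcq : 0 < ⟪x, q⟫ := hpos q hqK
    have hnint : q ∉ sphInt d K := by
      intro hq
      exact ((intrinsicFrontier_iff_projK hK hpos ⟨q, hqK, rfl⟩).1 hp')
        (mem_relInt_of_sphInt hKs hpos hq)
    obtain ⟨p, hpS, hne, hseg, z, hzgc, hzint⟩ := hSill q ⟨hqK, hnint⟩
    obtain ⟨hzS, hzspan⟩ := hzgc
    have hp0 : ⟪x, p⟫ = 0 := (hS0 p (Finset.mem_coe.1 hpS)).2
    obtain ⟨α, β, hαβ⟩ := Submodule.mem_span_pair.1 hzspan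
    have hzK : z ∈ K := sphInt_subset hzint
    have hcz : 0 < ⟪x, z⟫ := hpos z hzK
    have hizz : ⟪x, z⟫ = β * ⟪x, q⟫ := by
      rw [← hαβ, inner_add_right, real_inner_smul_right, real_inner_smul_right, hp0]; ring
    have hβ : 0 < β := by
      rw [hizz] at hcz
      by_contra hle
      push_neg at hle
      nlinarith
    have hαneg : α < 0 := by
      by_contra hge
      push_neg at hge
      have hαβpos : 0 < α + β := by linarith
      have hzarc : z ∈ sphSeg p q := by
        refine ⟨β / (α + β), ⟨div_nonneg hβ.le hαβpos.le,
          by rw [div_le_one hαβpos]; linarith⟩, ?_⟩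
        show nproj ((1 - β / (α + β)) • p + (β / (α + β)) • q) = z
        have hco : (1 - β / (α + β)) • p + (β / (α + β)) • q = (α + β)⁻¹ • z := by
          rw [← hαβ]
          have h1β : 1 - β / (α + β) = α / (α + β) := by field_simp; ring
          rw [h1β, smul_add, smul_smul, smul_smul, div_eq_inv_mul, div_eq_inv_mul]
        rw [hco, nproj_smul (inv_pos.2 hαβpos), nproj_eq_self (mem_uSphere_iff.1 hzS)]
      rw [Set.eq_empty_iff_forall_notMem] at hseg
      exact hseg z ⟨hzarc, hzint⟩
    have hfz : centralProj x z ∈ relInt x s := mem_relInt_of_sphInt hKs hpos hzint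
    have hfzeq : centralProj x z = centralProj x q + (α / (β * ⟪x, q⟫)) • p := by
      rw [centralProj, centralProj, hizz, ← hαβ]
      set A := ⟪x, q⟫ with hA
      have hAne : A ≠ 0 := hcq.ne'
      have hβne : β ≠ 0 := hβ.ne'
      match_scalars <;> field_simp <;> ring
    refine ⟨-p, Finset.mem_image_of_mem _ (Finset.mem_coe.1 hpS), -α / (β * ⟪x, q⟫),
      div_pos (neg_pos.2 hαneg) (mul_pos hβ hcq), ?_⟩
    rw [← relInt_eq_intrinsic hK hpos]
    have heq2 : centralProj x q + (-α / (β * ⟪x, q⟫)) • (-p)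
        = centralProj x q + (α / (β * ⟪x, q⟫)) • p := by
      rw [smul_neg, neg_div, neg_smul, neg_neg]
    rw [heq2, ← hfzeq]
    exact hfz
  calc intIllumNumber s ≤ (D.card : ℕ∞) := sInf_le ⟨D, h1, h2, rfl⟩
    _ ≤ (S.card : ℕ∞) := Nat.cast_le.2 Finset.card_image_le

lemma rhs_le {d : ℕ} {K : Set (Euc (d + 1))} (hK : IsSphBody d K) :
    sInf {m : ℕ∞ | ∃ x ∈ uSphere d,
      -x ∈ sphInt d (sphPolar d K) ∧ m = intIllumNumber (centralProj x '' K)}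
      ≤ sphIllumNumber d K := by
  apply le_sInf
  rintro n ⟨u, huS, hdisj, S, hSsub, hSill, hcard⟩
  have hu1 : ‖u‖ = 1 := mem_uSphere_iff.1 huS
  rcases sign_const hK hdisj with hneg | hposu
  · have hxS : -u ∈ uSphere d := mem_uSphere_iff.2 (by rw [norm_neg, hu1])
    have hpos : ∀ y ∈ K, 0 < ⟪-u, y⟫ := by
      intro y hy; rw [inner_neg_left]; linarith [hneg y hy]
    have hS0 : ∀ p ∈ S, p ∈ uSphere d ∧ ⟪-u, p⟫ = 0 := by
      intro p hp
      have h := hSsub (Finset.mem_coe.2 hp)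
      exact ⟨h.1, by rw [inner_neg_left, h.2]; ring⟩
    have hxi : -(-u) ∈ sphInt d (sphPolar d K) := neg_mem_sphInt_polar hK hxS hpos
    refine le_trans (sInf_le ⟨-u, hxS, hxi, rfl⟩) ?_
    rw [← hcard]
    exact intIllum_le_card hK hpos S hS0 hSill
  · have hS0 : ∀ p ∈ S, p ∈ uSphere d ∧ ⟪u, p⟫ = 0 := by
      intro p hp
      exact hSsub (Finset.mem_coe.2 hp)
    have hxi : -u ∈ sphInt d (sphPolar d K) := neg_mem_sphInt_polar hK huS hposu
    refine le_trans (sInf_le ⟨u, huS, hxi, rfl⟩) ?_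
    rw [← hcard]
    exact intIllum_le_card hK hposu S hS0 hSill

end AuxLemmas

/-- For `-x` interior to `K*`, the central projection `f_x(K)` is a convex body of the
tangent hyperplane at `x`, and `I_{S^d}(K) = min { I(f_x(K)) : -x ∈ int K* }`. -/
theorem stmt8 (d : ℕ) (K : Set (Euc (d + 1))) (hK : IsSphBody d K) :
    (∀ x ∈ uSphere d, -x ∈ sphInt d (sphPolar d K) →
      IsCompact (centralProj x '' K) ∧ Convex ℝ (centralProj x '' K) ∧
        (affineSpan ℝ (centralProj x '' K) : Set (Euc (d + 1))) = {y | ⟪x, y⟫ = 1} ∧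
        (intrinsicInterior ℝ (centralProj x '' K)).Nonempty) ∧
    sphIllumNumber d K = sInf {m : ℕ∞ | ∃ x ∈ uSphere d,
      -x ∈ sphInt d (sphPolar d K) ∧ m = intIllumNumber (centralProj x '' K)} := by
  constructor
  · intro x hx hxi
    have hKs : K ⊆ uSphere d := hK.2.1.1
    have hpos := pos_of_polarInt hKs hxi
    refine ⟨isCompact_projK hK.1 hpos, convex_projK hK hpos, span_projK hK hpos, ?_⟩
    obtain ⟨q0, hq0⟩ := hK.2.2
    exact ⟨centralProj x q0, by
      rw [← relInt_eq_intrinsic hK hpos]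
      exact mem_relInt_of_sphInt hKs hpos hq0⟩
  · apply le_antisymm
    · apply le_sInf
      rintro m ⟨x, hx, hxi, rfl⟩
      exact sphIllum_le_intIllum hK hx hxi
    · exact rhs_le hK
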